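/- Let p, q > 0 and let r, s, θ ∈ ℝ with r ∉ {−1, −2}. Let (u, v) be a positive classical solution of the Lane–Emden system −Δu = v^p, −Δv = u^q on ℝ^n. Then for every nonnegative φ ∈ C_c²(ℝ^n): (1/(r+1)) ∫ u^{r+1} v^{p+s} φ + μ₁ ∫ u^{r+2} v^{s−2} |∇v|² φ ≥ μ₂ ∫ u^{r+q+2} v^{s−1} φ + I₄, where μ₁ = s(s−1)/((r+1)(r+2)) + (2θ/(r+2))(θ + s + θr/2 − 1), μ₂ = (1/(r+2))(2θ + s/(r+1)), and I₄ = I₃ − I₂ with I₃ = −(2θ/(r+2)) ∫ u^{r+2} v^{s−1} (∇v·∇φ) and I₂ = −(1/(r+1)) ∫ u^{r+1} v^s (∇u·∇φ) + (s/((r+1)(r+2))) ∫ u^{r+2} v^{s−1} (∇v·∇φ), all integrals being over ℝ^n. -/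

import Mathlib

open MeasureTheory Real
open scoped InnerProductSpace

/-- The Laplacian of a function `f : ℝⁿ → ℝ`, as the sum of its second partial
derivatives. -/
noncomputable def lap {n : ℕ} (f : EuclideanSpace ℝ (Fin n) → ℝ)
    (x : EuclideanSpace ℝ (Fin n)) : ℝ :=
  ∑ i : Fin n, fderiv ℝ (fun y => fderiv ℝ f y (EuclideanSpace.single i 1)) x
    (EuclideanSpace.single i 1)

section Aux
variable {n : ℕ}
local notation "E" => EuclideanSpace ℝ (Fin n)

lemma inner_gradient_eq (f : E → ℝ) (x w : E) :
    ⟪gradient f x, w⟫_ℝ = fderiv ℝ f x w := by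
  simp [gradient, InnerProductSpace.toDual_symm_apply]

lemma gradient_coord (f : E → ℝ) (x : E) (i : Fin n) :
    gradient f x i = fderiv ℝ f x (EuclideanSpace.single i 1) := by
  rw [← inner_gradient_eq]
  rw [EuclideanSpace.inner_single_right]
  simp

lemma ibp (f ψ : E → ℝ) (hf : ContDiff ℝ 2 f) (hψ : ContDiff ℝ 1 ψ)
    (hψc : HasCompactSupport ψ) :
    ∫ x, lap f x * ψ x = - ∫ x, ⟪gradient f x, gradient ψ x⟫_ℝ := by
  have hψd : Differentiable ℝ ψ := hψ.differentiable one_ne_zero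
  have hfd1 : ContDiff ℝ 1 (fderiv ℝ f) := hf.fderiv_right (by norm_num)
  have hgC : ∀ i : Fin n, ContDiff ℝ 1 (fun y => fderiv ℝ f y (EuclideanSpace.single i 1)) :=
    fun i => ContDiff.comp (ContinuousLinearMap.apply ℝ ℝ
      ((EuclideanSpace.single i 1 : EuclideanSpace ℝ (Fin n)))).contDiff hfd1
  have hgd : ∀ i, Differentiable ℝ (fun y => fderiv ℝ f y (EuclideanSpace.single i 1)) :=
    fun i => (hgC i).differentiable one_ne_zero
  have hgc : ∀ i, Continuous (fun y => fderiv ℝ f y (EuclideanSpace.single i 1)) :=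
    fun i => (hgd i).continuous
  have hg'c : ∀ i, Continuous fun x =>
      fderiv ℝ (fun y => fderiv ℝ f y (EuclideanSpace.single i 1)) x (EuclideanSpace.single i 1) :=
    fun i => (ContinuousLinearMap.apply ℝ ℝ _).continuous.comp ((hgC i).continuous_fderiv one_ne_zero)
  have hψ'c : ∀ w : E, Continuous fun x => fderiv ℝ ψ x w := fun w =>
    (ContinuousLinearMap.apply ℝ ℝ w).continuous.comp (hψ.continuous_fderiv one_ne_zero)
  have int1 : ∀ i, Integrable (fun x => ψ x *
      fderiv ℝ (fun y => fderiv ℝ f y (EuclideanSpace.single i 1)) x (EuclideanSpace.single i 1)) :=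
    fun i => (hψ.continuous.mul (hg'c i)).integrable_of_hasCompactSupport hψc.mul_right
  have int2 : ∀ i, Integrable (fun x => fderiv ℝ ψ x (EuclideanSpace.single i 1) *
      fderiv ℝ f x (EuclideanSpace.single i 1)) :=
    fun i => ((hψ'c _).mul (hgc i)).integrable_of_hasCompactSupport
      ((hψc.fderiv_apply ℝ _).mul_right)
  have int3 : ∀ i, Integrable (fun x => ψ x * fderiv ℝ f x (EuclideanSpace.single i 1)) :=
    fun i => (hψ.continuous.mul (hgc i)).integrable_of_hasCompactSupport hψc.mul_right
  have step : ∀ i : Fin n, (∫ x, ψ x *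
      fderiv ℝ (fun y => fderiv ℝ f y (EuclideanSpace.single i 1)) x (EuclideanSpace.single i 1))
      = - ∫ x, fderiv ℝ ψ x (EuclideanSpace.single i 1) * fderiv ℝ f x (EuclideanSpace.single i 1) :=
    fun i => integral_mul_fderiv_eq_neg_fderiv_mul_of_integrable (int2 i) (int1 i) (int3 i)
      (fun x _ => hψd x) (fun x _ => hgd i x)
  calc ∫ x, lap f x * ψ x
      = ∫ x, ∑ i : Fin n, ψ x *
          fderiv ℝ (fun y => fderiv ℝ f y (EuclideanSpace.single i 1)) x
            (EuclideanSpace.single i 1) := by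
        refine integral_congr_ae (.of_forall fun x => ?_)
        simp only []
        rw [show lap f x = ∑ i : Fin n, fderiv ℝ (fun y => fderiv ℝ f y (EuclideanSpace.single i 1)) x (EuclideanSpace.single i 1) from rfl, Finset.sum_mul]
        exact Finset.sum_congr rfl fun i _ => mul_comm _ _
    _ = ∑ i : Fin n, ∫ x, ψ x *
          fderiv ℝ (fun y => fderiv ℝ f y (EuclideanSpace.single i 1)) x
            (EuclideanSpace.single i 1) := integral_finset_sum _ fun i _ => int1 i
    _ = ∑ i : Fin n, - ∫ x, fderiv ℝ ψ x (EuclideanSpace.single i 1) *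
          fderiv ℝ f x (EuclideanSpace.single i 1) := by simp_rw [step]
    _ = - ∑ i : Fin n, ∫ x, fderiv ℝ ψ x (EuclideanSpace.single i 1) *
          fderiv ℝ f x (EuclideanSpace.single i 1) := by rw [Finset.sum_neg_distrib]
    _ = - ∫ x, ∑ i : Fin n, fderiv ℝ ψ x (EuclideanSpace.single i 1) *
          fderiv ℝ f x (EuclideanSpace.single i 1) := by
        rw [integral_finset_sum _ fun i _ => int2 i]
    _ = - ∫ x, ⟪gradient f x, gradient ψ x⟫_ℝ := by
        congr 1
        refine integral_congr_ae (.of_forall fun x => ?_)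
        simp only []
        simp only [PiLp.inner_apply, RCLike.inner_apply, conj_trivial, gradient_coord]


lemma continuous_gradient {f : E → ℝ} (hf : ContDiff ℝ 2 f) :
    Continuous fun x => gradient f x := by
  exact (InnerProductSpace.toDual ℝ _).symm.continuous.comp (hf.continuous_fderiv two_ne_zero)

lemma hcs_gradient {f : E → ℝ} (hf : HasCompactSupport f) :
    HasCompactSupport fun x => gradient f x :=
  (hf.fderiv ℝ).comp_left (g := (InnerProductSpace.toDual ℝ _).symm) (map_zero _)

end Aux

set_option maxHeartbeats 2000000 in
theorem estimates_combine (n : ℕ) (p q r s θ : ℝ) (hp : 0 < p) (hq : 0 < q)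
    (hr1 : r ≠ -1) (hr2 : r ≠ -2)
    (u v : EuclideanSpace ℝ (Fin n) → ℝ)
    (hu : ContDiff ℝ 2 u) (hv : ContDiff ℝ 2 v)
    (hu0 : ∀ x, 0 < u x) (hv0 : ∀ x, 0 < v x)
    (hue : ∀ x, -lap u x = v x ^ p) (hve : ∀ x, -lap v x = u x ^ q)
    (φ : EuclideanSpace ℝ (Fin n) → ℝ) (hφ : ContDiff ℝ 2 φ)
    (hφc : HasCompactSupport φ) (hφ0 : ∀ x, 0 ≤ φ x) :
    (1 / (r + 1)) * (∫ x, u x ^ (r + 1) * v x ^ (p + s) * φ x)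
      + (s * (s - 1) / ((r + 1) * (r + 2))
          + (2 * θ / (r + 2)) * (θ + s + θ * r / 2 - 1)) *
        (∫ x, u x ^ (r + 2) * v x ^ (s - 2) * ‖gradient v x‖ ^ 2 * φ x)
    ≥ (1 / (r + 2)) * (2 * θ + s / (r + 1)) *
        (∫ x, u x ^ (r + q + 2) * v x ^ (s - 1) * φ x)
      + ((-(2 * θ / (r + 2)) *
          (∫ x, u x ^ (r + 2) * v x ^ (s - 1) *
            ⟪gradient v x, gradient φ x⟫_ℝ))
        - (-(1 / (r + 1)) *
            (∫ x, u x ^ (r + 1) * v x ^ s * ⟪gradient u x, gradient φ x⟫_ℝ)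
          + s / ((r + 1) * (r + 2)) *
            (∫ x, u x ^ (r + 2) * v x ^ (s - 1) *
              ⟪gradient v x, gradient φ x⟫_ℝ))) := by
  have hr1' : r + 1 ≠ 0 := fun h => hr1 (by linarith)
  have hr2' : r + 2 ≠ 0 := fun h => hr2 (by linarith)
  have hun : ∀ x, u x ≠ 0 := fun x => (hu0 x).ne'
  have hvn : ∀ x, v x ≠ 0 := fun x => (hv0 x).ne'
  have hud : Differentiable ℝ u := hu.differentiable two_ne_zero
  have hvd : Differentiable ℝ v := hv.differentiable two_ne_zero
  have hφd : Differentiable ℝ φ := hφ.differentiable two_ne_zero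
  have hcu : ∀ c : ℝ, Continuous fun x => u x ^ c := fun c =>
    hu.continuous.rpow_const fun x => Or.inl (hun x)
  have hcv : ∀ c : ℝ, Continuous fun x => v x ^ c := fun c =>
    hv.continuous.rpow_const fun x => Or.inl (hvn x)
  have hgu : Continuous fun x => gradient u x := continuous_gradient hu
  have hgv : Continuous fun x => gradient v x := continuous_gradient hv
  have hgφ : Continuous fun x => gradient φ x := continuous_gradient hφ
  have hgφs : HasCompactSupport fun x => gradient φ x := hcs_gradient hφc
  -- compact support helpers
  have csφ : ∀ c : EuclideanSpace ℝ (Fin n) → ℝ, HasCompactSupport fun x => c x * φ x := fun c => hφc.mul_left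
  have csγ : ∀ (c : EuclideanSpace ℝ (Fin n) → ℝ) (w : EuclideanSpace ℝ (Fin n) → EuclideanSpace ℝ (Fin n)),
      HasCompactSupport fun x => c x * ⟪w x, gradient φ x⟫_ℝ := by
    intro c w
    apply hgφs.mono
    intro x hx
    simp only [Function.mem_support] at hx ⊢
    exact fun h0 => hx (by rw [h0, inner_zero_right, mul_zero])
  -- integrable facts
  have iA : Integrable (fun x => u x ^ r * v x ^ s * ‖gradient u x‖ ^ 2 * φ x) :=
    ((((hcu r).mul (hcv s)).mul (hgu.norm.pow 2)).mul hφ.continuous).integrable_of_hasCompactSupport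
      (csφ _)
  have iJ : Integrable (fun x =>
      u x ^ (r + 1) * v x ^ (s - 1) * ⟪gradient u x, gradient v x⟫_ℝ * φ x) :=
    ((((hcu _).mul (hcv _)).mul (hgu.inner hgv)).mul hφ.continuous).integrable_of_hasCompactSupport
      (csφ _)
  have iB : Integrable (fun x => u x ^ (r + 2) * v x ^ (s - 2) * ‖gradient v x‖ ^ 2 * φ x) :=
    ((((hcu _).mul (hcv _)).mul (hgv.norm.pow 2)).mul hφ.continuous).integrable_of_hasCompactSupport
      (csφ _)
  have iL : Integrable (fun x => u x ^ (r + 1) * v x ^ s * ⟪gradient u x, gradient φ x⟫_ℝ) :=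
    (((hcu _).mul (hcv _)).mul (hgu.inner hgφ)).integrable_of_hasCompactSupport (csγ _ _)
  have iK : Integrable (fun x => u x ^ (r + 2) * v x ^ (s - 1) * ⟪gradient v x, gradient φ x⟫_ℝ) :=
    (((hcu _).mul (hcv _)).mul (hgv.inner hgφ)).integrable_of_hasCompactSupport (csγ _ _)
  -- smoothness of test functions ψ = u^a v^b φ
  have hψC : ∀ a b : ℝ, ContDiff ℝ 1 fun x => u x ^ a * v x ^ b * φ x := by
    intro a b
    rw [contDiff_iff_contDiffAt]
    intro x
    exact (((hu.contDiffAt.of_le one_le_two).rpow_const_of_ne (hun x)).mul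
      ((hv.contDiffAt.of_le one_le_two).rpow_const_of_ne (hvn x))).mul
      (hφ.contDiffAt.of_le one_le_two)
  have hψc' : ∀ a b : ℝ, HasCompactSupport fun x => u x ^ a * v x ^ b * φ x := fun a b =>
    hφc.mul_left
  -- derivative of ψ
  have hDu : ∀ (c : ℝ) (x), HasFDerivAt (fun y => u y ^ c)
      ((c * u x ^ (c - 1)) • fderiv ℝ u x) x := fun c x =>
    ((hud x).hasFDerivAt).rpow_const (Or.inl (hun x))
  have hDv : ∀ (c : ℝ) (x), HasFDerivAt (fun y => v y ^ c)
      ((c * v x ^ (c - 1)) • fderiv ℝ v x) x := fun c x =>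
    ((hvd x).hasFDerivAt).rpow_const (Or.inl (hvn x))
  have hψD : ∀ (a b : ℝ) (x), HasFDerivAt (fun y => u y ^ a * v y ^ b * φ y)
      ((u x ^ a * v x ^ b) • fderiv ℝ φ x +
        φ x • (u x ^ a • ((b * v x ^ (b - 1)) • fderiv ℝ v x)
          + v x ^ b • ((a * u x ^ (a - 1)) • fderiv ℝ u x))) x := fun a b x =>
    ((hDu a x).mul (hDv b x)).mul ((hφd x).hasFDerivAt)
  -- expansion of the inner products
  have expand : ∀ (a b : ℝ) (x w : EuclideanSpace ℝ (Fin n)),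
      fderiv ℝ (fun y => u y ^ a * v y ^ b * φ y) x w
        = u x ^ a * v x ^ b * fderiv ℝ φ x w
          + φ x * (u x ^ a * (b * v x ^ (b - 1) * fderiv ℝ v x w)
            + v x ^ b * (a * u x ^ (a - 1) * fderiv ℝ u x w)) := by
    intro a b x w
    rw [(hψD a b x).fderiv]
    simp only [ContinuousLinearMap.add_apply, ContinuousLinearMap.coe_smul',
      Pi.smul_apply, smul_eq_mul]
  have expandu : ∀ (a b : ℝ) (x),
      ⟪gradient u x, gradient (fun y => u y ^ a * v y ^ b * φ y) x⟫_ℝ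
        = a * (u x ^ (a - 1) * v x ^ b * ‖gradient u x‖ ^ 2 * φ x)
          + (b * (u x ^ a * v x ^ (b - 1) * ⟪gradient u x, gradient v x⟫_ℝ * φ x)
            + u x ^ a * v x ^ b * ⟪gradient u x, gradient φ x⟫_ℝ) := by
    intro a b x
    rw [real_inner_comm, inner_gradient_eq, expand a b x, ← inner_gradient_eq u,
      ← inner_gradient_eq v, ← inner_gradient_eq φ, real_inner_self_eq_norm_sq,
      real_inner_comm (gradient v x), real_inner_comm (gradient φ x)]
    ring
  have expandv : ∀ (a b : ℝ) (x),
      ⟪gradient v x, gradient (fun y => u y ^ a * v y ^ b * φ y) x⟫_ℝ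
        = a * (u x ^ (a - 1) * v x ^ b * ⟪gradient u x, gradient v x⟫_ℝ * φ x)
          + (b * (u x ^ a * v x ^ (b - 1) * ‖gradient v x‖ ^ 2 * φ x)
            + u x ^ a * v x ^ b * ⟪gradient v x, gradient φ x⟫_ℝ) := by
    intro a b x
    rw [real_inner_comm, inner_gradient_eq, expand a b x, ← inner_gradient_eq u,
      ← inner_gradient_eq v, ← inner_gradient_eq φ, real_inner_self_eq_norm_sq,
      real_inner_comm (gradient φ x)]
    ring
  -- identity E1
  have E1 : (∫ x, u x ^ (r + 1) * v x ^ (p + s) * φ x)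
      = (r + 1) * (∫ x, u x ^ r * v x ^ s * ‖gradient u x‖ ^ 2 * φ x)
        + (s * (∫ x, u x ^ (r + 1) * v x ^ (s - 1) * ⟪gradient u x, gradient v x⟫_ℝ * φ x)
          + ∫ x, u x ^ (r + 1) * v x ^ s * ⟪gradient u x, gradient φ x⟫_ℝ) := by
    have h1 : (∫ x, u x ^ (r + 1) * v x ^ (p + s) * φ x)
        = - ∫ x, lap u x * (u x ^ (r + 1) * v x ^ s * φ x) := by
      rw [← integral_neg]
      refine integral_congr_ae (.of_forall fun x => ?_)
      simp only []
      have hl : lap u x = -(v x ^ p) := by linarith [hue x]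
      rw [hl, rpow_add (hv0 x)]
      ring
    rw [h1, ibp u _ hu (hψC (r + 1) s) (hψc' (r + 1) s), neg_neg]
    have h2 : ∀ x, ⟪gradient u x, gradient (fun y => u y ^ (r + 1) * v y ^ s * φ y) x⟫_ℝ
        = (r + 1) * (u x ^ r * v x ^ s * ‖gradient u x‖ ^ 2 * φ x)
          + (s * (u x ^ (r + 1) * v x ^ (s - 1) * ⟪gradient u x, gradient v x⟫_ℝ * φ x)
            + u x ^ (r + 1) * v x ^ s * ⟪gradient u x, gradient φ x⟫_ℝ) := by
      intro x
      rw [expandu (r + 1) s x, show r + 1 - 1 = r from by ring]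
    simp_rw [h2]
    have i23 : Integrable (fun x =>
        s * (u x ^ (r + 1) * v x ^ (s - 1) * ⟪gradient u x, gradient v x⟫_ℝ * φ x)
          + u x ^ (r + 1) * v x ^ s * ⟪gradient u x, gradient φ x⟫_ℝ) :=
      (iJ.const_mul s).add iL
    rw [integral_add (iA.const_mul (r + 1)) i23, integral_add (iJ.const_mul s) iL,
      integral_const_mul, integral_const_mul]
  -- identity E2
  have E2 : (∫ x, u x ^ (r + q + 2) * v x ^ (s - 1) * φ x)
      = (r + 2) * (∫ x, u x ^ (r + 1) * v x ^ (s - 1) * ⟪gradient u x, gradient v x⟫_ℝ * φ x)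
        + ((s - 1) * (∫ x, u x ^ (r + 2) * v x ^ (s - 2) * ‖gradient v x‖ ^ 2 * φ x)
          + ∫ x, u x ^ (r + 2) * v x ^ (s - 1) * ⟪gradient v x, gradient φ x⟫_ℝ) := by
    have h1 : (∫ x, u x ^ (r + q + 2) * v x ^ (s - 1) * φ x)
        = - ∫ x, lap v x * (u x ^ (r + 2) * v x ^ (s - 1) * φ x) := by
      rw [← integral_neg]
      refine integral_congr_ae (.of_forall fun x => ?_)
      simp only []
      have hl : lap v x = -(u x ^ q) := by linarith [hve x]
      rw [hl, show r + q + 2 = q + (r + 2) from by ring, rpow_add (hu0 x)]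
      ring
    rw [h1, ibp v _ hv (hψC (r + 2) (s - 1)) (hψc' (r + 2) (s - 1)), neg_neg]
    have h2 : ∀ x, ⟪gradient v x, gradient (fun y => u y ^ (r + 2) * v y ^ (s - 1) * φ y) x⟫_ℝ
        = (r + 2) * (u x ^ (r + 1) * v x ^ (s - 1) * ⟪gradient u x, gradient v x⟫_ℝ * φ x)
          + ((s - 1) * (u x ^ (r + 2) * v x ^ (s - 2) * ‖gradient v x‖ ^ 2 * φ x)
            + u x ^ (r + 2) * v x ^ (s - 1) * ⟪gradient v x, gradient φ x⟫_ℝ) := by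
      intro x
      rw [expandv (r + 2) (s - 1) x, show r + 2 - 1 = r + 1 from by ring,
        show s - 1 - 1 = s - 2 from by ring]
    simp_rw [h2]
    have i23 : Integrable (fun x =>
        (s - 1) * (u x ^ (r + 2) * v x ^ (s - 2) * ‖gradient v x‖ ^ 2 * φ x)
          + u x ^ (r + 2) * v x ^ (s - 1) * ⟪gradient v x, gradient φ x⟫_ℝ) :=
      (iB.const_mul (s - 1)).add iK
    rw [integral_add (iJ.const_mul (r + 2)) i23, integral_add (iB.const_mul (s - 1)) iK,
      integral_const_mul, integral_const_mul]
  -- inequality E3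
  have E3 : 0 ≤ (∫ x, u x ^ r * v x ^ s * ‖gradient u x‖ ^ 2 * φ x)
      - 2 * θ * (∫ x, u x ^ (r + 1) * v x ^ (s - 1) * ⟪gradient u x, gradient v x⟫_ℝ * φ x)
      + θ ^ 2 * (∫ x, u x ^ (r + 2) * v x ^ (s - 2) * ‖gradient v x‖ ^ 2 * φ x) := by
    have hrw : (∫ x, u x ^ r * v x ^ s * ‖gradient u x‖ ^ 2 * φ x)
        - 2 * θ * (∫ x, u x ^ (r + 1) * v x ^ (s - 1) * ⟪gradient u x, gradient v x⟫_ℝ * φ x)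
        + θ ^ 2 * (∫ x, u x ^ (r + 2) * v x ^ (s - 2) * ‖gradient v x‖ ^ 2 * φ x)
        = ∫ x, (u x ^ r * v x ^ s * φ x) *
            ‖gradient u x - (θ * u x / v x) • gradient v x‖ ^ 2 := by
      have iJ2 : Integrable (fun x =>
          2 * θ * (u x ^ (r + 1) * v x ^ (s - 1) * ⟪gradient u x, gradient v x⟫_ℝ * φ x)) :=
        iJ.const_mul (2 * θ)
      have iB2 : Integrable (fun x =>
          θ ^ 2 * (u x ^ (r + 2) * v x ^ (s - 2) * ‖gradient v x‖ ^ 2 * φ x)) :=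
        iB.const_mul (θ ^ 2)
      have iAJ : Integrable (fun x =>
          u x ^ r * v x ^ s * ‖gradient u x‖ ^ 2 * φ x
            - 2 * θ * (u x ^ (r + 1) * v x ^ (s - 1) * ⟪gradient u x, gradient v x⟫_ℝ * φ x)) :=
        iA.sub iJ2
      rw [← integral_const_mul, ← integral_const_mul, ← integral_sub iA iJ2,
        ← integral_add iAJ iB2]
      refine integral_congr_ae (.of_forall fun x => ?_)
      simp only [Pi.sub_apply, Pi.add_apply]
      rw [norm_sub_sq_real, real_inner_smul_right, norm_smul, Real.norm_eq_abs, mul_pow, sq_abs]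
      have h1 : u x ^ (r + 1) = u x ^ r * u x := rpow_add_one (hun x) r
      have h2 : u x ^ (r + 2) = u x ^ r * u x * u x := by
        rw [show r + 2 = r + 1 + 1 from by ring, rpow_add_one (hun x), h1]
      have h3 : v x ^ (s - 1) = v x ^ s / v x := rpow_sub_one (hvn x) s
      have h4 : v x ^ (s - 2) = v x ^ s / v x / v x := by
        rw [show s - 2 = s - 1 - 1 from by ring, rpow_sub_one (hvn x), h3]
      rw [h1, h2, h3, h4]
      field_simp
    rw [hrw]
    refine integral_nonneg fun x => ?_
    have := rpow_pos_of_pos (hu0 x) r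
    have := rpow_pos_of_pos (hv0 x) s
    have := hφ0 x
    positivity
  have key : ∀ A J B L K : ℝ, 0 ≤ A - 2 * θ * J + θ ^ 2 * B →
      (1 / (r + 2)) * (2 * θ + s / (r + 1)) * ((r + 2) * J + ((s - 1) * B + K))
        + ((-(2 * θ / (r + 2)) * K)
          - (-(1 / (r + 1)) * L + s / ((r + 1) * (r + 2)) * K))
      ≤ (1 / (r + 1)) * ((r + 1) * A + (s * J + L))
        + (s * (s - 1) / ((r + 1) * (r + 2)) + (2 * θ / (r + 2)) * (θ + s + θ * r / 2 - 1)) * B := by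
    intro A J B L K h
    rw [← sub_nonneg]
    have hsub : (1 / (r + 1)) * ((r + 1) * A + (s * J + L))
        + (s * (s - 1) / ((r + 1) * (r + 2)) + (2 * θ / (r + 2)) * (θ + s + θ * r / 2 - 1)) * B
        - ((1 / (r + 2)) * (2 * θ + s / (r + 1)) * ((r + 2) * J + ((s - 1) * B + K))
          + ((-(2 * θ / (r + 2)) * K)
            - (-(1 / (r + 1)) * L + s / ((r + 1) * (r + 2)) * K)))
        = A - 2 * θ * J + θ ^ 2 * B := by
      field_simp
      ring
    rw [hsub]
    exact h
  rw [ge_iff_le, E1, E2]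
  exact key _ _ _ _ _ E3
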